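/- The change of variables z₁ = t·z, w₁ = w/t is symplectic: if (z(t), w(t)) solves the Hamiltonian system for K₂ = (3/(4t))z²w² + (3/2)z²w + ((3α₁+3α₂-2)/(2t))zw + (3/2)α₁z, then (z₁, w₁) solves the Hamiltonian system (in variables z₁, w₁) for the Hamiltonian K̃₂ = (3 z₁ (z₁w₁² + 2z₁w₁ + 2(α₁+α₂)w₁ + 2α₁))/(4t). -/

import Mathlib

set_option maxHeartbeats 1000000

lemma quadDeriv (A B C x : ℂ) :
    HasDerivAt (fun y : ℂ => A * y ^ 2 + B * y + C) (2 * A * x + B) x := by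
  have h1 : HasDerivAt (fun y : ℂ => A * y ^ 2) (A * (2 * x ^ 1)) x := by
    simpa using (hasDerivAt_pow 2 x).const_mul A
  have h2 : HasDerivAt (fun y : ℂ => B * y) B x := by
    simpa using (hasDerivAt_id x).const_mul B
  have h := (h1.add h2).add_const C
  refine h.congr_deriv ?_
  ring

/-- The symplectic change z₁ = t z, w₁ = w/t sends solutions of the
Hamiltonian system for K₂ to solutions of the Hamiltonian system for K̃₂. -/
theorem stmt_2 (α₁ α₂ : ℂ)
    (K₂ Kt₂ : ℂ → ℂ → ℂ → ℂ)
    (hK₂ : ∀ t z w : ℂ, K₂ t z w =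
      (3 / (4 * t)) * z ^ 2 * w ^ 2 + (3 / 2) * z ^ 2 * w
      + ((3 * α₁ + 3 * α₂ - 2) / (2 * t)) * z * w + (3 / 2) * α₁ * z)
    (hKt₂ : ∀ t z₁ w₁ : ℂ, Kt₂ t z₁ w₁ =
      3 * z₁ * (z₁ * w₁ ^ 2 + 2 * z₁ * w₁ + 2 * (α₁ + α₂) * w₁ + 2 * α₁) / (4 * t))
    (z w : ℝ → ℂ)
    (hsol : ∀ t : ℝ, 0 < t →
      HasDerivAt z (deriv (fun wv => K₂ (t : ℂ) (z t) wv) (w t)) t ∧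
      HasDerivAt w (-deriv (fun zv => K₂ (t : ℂ) zv (w t)) (z t)) t) :
    ∀ t : ℝ, 0 < t →
      HasDerivAt (fun s : ℝ => (s : ℂ) * z s)
        (deriv (fun wv => Kt₂ (t : ℂ) ((t : ℂ) * z t) wv) (w t / (t : ℂ))) t ∧
      HasDerivAt (fun s : ℝ => w s / (s : ℂ))
        (-deriv (fun zv => Kt₂ (t : ℂ) zv (w t / (t : ℂ))) ((t : ℂ) * z t)) t := by
  intro t ht
  obtain ⟨hz, hw⟩ := hsol t ht
  have ht0 : (t : ℂ) ≠ 0 := by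
    exact_mod_cast (show (t:ℝ) ≠ 0 from ht.ne')
  set c : ℂ := 3 * α₁ + 3 * α₂ - 2 with hc
  -- inner derivative of K₂ in w
  have dKw : deriv (fun wv => K₂ (t:ℂ) (z t) wv) (w t)
      = 2 * ((3 / (4 * t)) * (z t) ^ 2) * (w t)
        + ((3 / 2) * (z t) ^ 2 + (c / (2 * t)) * (z t)) := by
    have h1 : (fun wv => K₂ (t:ℂ) (z t) wv)
        = fun wv => ((3 / (4 * (t:ℂ))) * (z t) ^ 2) * wv ^ 2
          + ((3 / 2) * (z t) ^ 2 + (c / (2 * t)) * (z t)) * wv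
          + (3 / 2) * α₁ * (z t) := by
      funext wv; rw [hK₂]; ring
    rw [h1]
    exact (quadDeriv _ _ _ _).deriv
  -- inner derivative of K₂ in z
  have dKz : deriv (fun zv => K₂ (t:ℂ) zv (w t)) (z t)
      = 2 * ((3 / (4 * t)) * (w t) ^ 2 + (3 / 2) * (w t)) * (z t)
        + ((c / (2 * t)) * (w t) + (3 / 2) * α₁) := by
    have h1 : (fun zv => K₂ (t:ℂ) zv (w t))
        = fun zv => ((3 / (4 * (t:ℂ))) * (w t) ^ 2 + (3 / 2) * (w t)) * zv ^ 2
          + ((c / (2 * t)) * (w t) + (3 / 2) * α₁) * zv + 0 := by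
      funext zv; rw [hK₂]; ring
    rw [h1]
    exact (quadDeriv _ _ _ _).deriv
  -- inner derivative of Kt₂ in w₁
  have dKtw : deriv (fun wv => Kt₂ (t:ℂ) ((t:ℂ) * z t) wv) (w t / (t:ℂ))
      = 2 * (3 * ((t:ℂ) * z t) ^ 2 / (4 * t)) * (w t / t)
        + (3 * ((t:ℂ) * z t) * (2 * ((t:ℂ) * z t) + 2 * (α₁ + α₂)) / (4 * t)) := by
    have h1 : (fun wv => Kt₂ (t:ℂ) ((t:ℂ) * z t) wv)
        = fun wv => (3 * ((t:ℂ) * z t) ^ 2 / (4 * t)) * wv ^ 2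
          + (3 * ((t:ℂ) * z t) * (2 * ((t:ℂ) * z t) + 2 * (α₁ + α₂)) / (4 * t)) * wv
          + 3 * ((t:ℂ) * z t) * (2 * α₁) / (4 * t) := by
      funext wv; rw [hKt₂]; ring
    rw [h1]
    exact (quadDeriv _ _ _ _).deriv
  -- inner derivative of Kt₂ in z₁
  have dKtz : deriv (fun zv => Kt₂ (t:ℂ) zv (w t / (t:ℂ))) ((t:ℂ) * z t)
      = 2 * (3 * ((w t / t) ^ 2 + 2 * (w t / t)) / (4 * t)) * ((t:ℂ) * z t)
        + (3 * (2 * (α₁ + α₂) * (w t / t) + 2 * α₁) / (4 * t)) := by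
    have h1 : (fun zv => Kt₂ (t:ℂ) zv (w t / (t:ℂ)))
        = fun zv => (3 * ((w t / (t:ℂ)) ^ 2 + 2 * (w t / t)) / (4 * t)) * zv ^ 2
          + (3 * (2 * (α₁ + α₂) * (w t / t) + 2 * α₁) / (4 * t)) * zv + 0 := by
      funext zv; rw [hKt₂]; ring
    rw [h1]
    exact (quadDeriv _ _ _ _).deriv
  rw [dKw] at hz
  rw [dKz] at hw
  have hcoe : HasDerivAt (fun s : ℝ => (s : ℂ)) 1 t := by
    simpa using (hasDerivAt_id t).ofReal_comp
  constructor
  · rw [dKtw]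
    have h := hcoe.mul hz
    refine h.congr_deriv ?_
    field_simp [ht0]
    ring
  · rw [dKtz]
    have h := hw.div hcoe ht0
    refine h.congr_deriv ?_
    field_simp [ht0]
    rw [hc]
    ring
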